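/- Let ψ : G → G be a commutator-central endomorphism of a group G and let α ∈ 𝓔. Then (G, ∘_{ψ,α}) is a group: the operation ∘_{ψ,α} is associative, 1 is a two-sided identity for ∘_{ψ,α}, and for every g ∈ G the element ψ_α(g)⁻¹ · g⁻¹ · ψ_α(g) is a two-sided inverse of g with respect to ∘_{ψ,α}. -/

import Mathlib

/-- Evaluation of an element of the free group `𝓔 = FreeGroup (Monoid.End G)`
at an element `g : G`: the image of `α` under the homomorphism `𝓔 → G`
given by `FreeGroup.lift (fun φ => φ g)`. -/
def evalE {G : Type*} [Group G] (α : FreeGroup (Monoid.End G)) (g : G) : G :=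
  FreeGroup.lift (fun φ : Monoid.End G => φ g) α

/-- The binary operation `g ∘_{ψ,α} h = g · ψ_α(g) · h · ψ_α(g)⁻¹`, where
`ψ_α(g) = ψ (α(g))`. -/
def op {G : Type*} [Group G] (ψ : Monoid.End G) (α : FreeGroup (Monoid.End G)) (g h : G) : G :=
  g * ψ (evalE α g) * h * (ψ (evalE α g))⁻¹

open scoped commutatorElement

lemma evalE_apply_one {G : Type*} [Group G] (α : FreeGroup (Monoid.End G)) :
    evalE α (1 : G) = 1 := by
  have h1 : FreeGroup.lift (fun φ : Monoid.End G => φ (1 : G)) =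
      FreeGroup.lift (fun _ : Monoid.End G => (1 : G)) := by
    congr 1; funext φ; exact map_one φ
  have h2 : FreeGroup.lift (fun _ : Monoid.End G => (1 : G)) = 1 := by
    ext x; simp
  simp [evalE, h1, h2]

/-- `evalE α` is a homomorphism modulo commutators. -/
lemma evalE_ab {G : Type*} [Group G] (α : FreeGroup (Monoid.End G)) (g h : G) :
    Abelianization.of (evalE α (g * h)) =
      Abelianization.of (evalE α g) * Abelianization.of (evalE α h) := by
  induction α using FreeGroup.induction_on with
  | C1 =>
      have e0 : ∀ x : G, evalE (1 : FreeGroup (Monoid.End G)) x = 1 := fun x =>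
        map_one (FreeGroup.lift _)
      rw [e0, e0, e0]; simp
  | of φ =>
      have ep : ∀ x : G, evalE (FreeGroup.of φ : FreeGroup (Monoid.End G)) x = φ x := fun x =>
        FreeGroup.lift_apply_of
      rw [ep, ep, ep, map_mul, map_mul]
  | inv_of φ _ =>
      have ep : ∀ x : G, evalE (FreeGroup.of φ : FreeGroup (Monoid.End G)) x = φ x := fun x =>
        FreeGroup.lift_apply_of
      have ei : ∀ x : G, evalE ((FreeGroup.of φ)⁻¹ : FreeGroup (Monoid.End G)) x = (φ x)⁻¹ := fun x => by
        rw [evalE, map_inv]; exact congrArg Inv.inv (ep x)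
      rw [ei, ei, ei, map_mul, map_inv, map_inv, map_inv, map_mul, mul_inv]
  | mul β γ hβ hγ =>
      have e1 : ∀ x : G, evalE (β * γ) x = evalE β x * evalE γ x := fun x =>
        map_mul (FreeGroup.lift _) β γ
      rw [e1, e1, e1, map_mul, map_mul, map_mul, hβ, hγ, mul_mul_mul_comm]

lemma psi_center {G : Type*} [Group G] (ψ : Monoid.End G)
    (hψ : ∀ g h : G, ψ ⁅g, h⁆ ∈ Subgroup.center G)
    {w : G} (hw : w ∈ commutator G) : ψ w ∈ Subgroup.center G := by
  rw [commutator_eq_closure] at hw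
  induction hw using Subgroup.closure_induction with
  | mem x hx => obtain ⟨p, q, rfl⟩ := hx; exact hψ p q
  | one => rw [map_one]; exact Subgroup.one_mem _
  | mul x y _ _ hx hy => rw [map_mul]; exact mul_mem hx hy
  | inv x _ hx => rw [map_inv]; exact inv_mem hx

/-- Key: if `a` and `b` agree in the abelianization, then `ψ a` and `ψ b` differ by a
central element. -/
lemma psi_eq_of_ab {G : Type*} [Group G] (ψ : Monoid.End G)
    (hψ : ∀ g h : G, ψ ⁅g, h⁆ ∈ Subgroup.center G)
    {a b : G} (hab : Abelianization.of a = Abelianization.of b) :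
    ∃ z ∈ Subgroup.center G, ψ a = ψ b * z := by
  have hmem : b⁻¹ * a ∈ commutator G := by
    have : (QuotientGroup.mk b : G ⧸ commutator G) = QuotientGroup.mk a := hab.symm
    exact QuotientGroup.eq.mp this
  refine ⟨ψ (b⁻¹ * a), psi_center ψ hψ hmem, ?_⟩
  rw [← map_mul]
  congr 1
  group

/-- `(G, ∘_{ψ,α})` is a group: the operation is associative, `1` is a
two-sided identity, and `ψ_α(g)⁻¹ · g⁻¹ · ψ_α(g)` is a two-sided inverse of `g`. -/
theorem op_group {G : Type*} [Group G]
    (ψ : Monoid.End G) (hψ : ∀ g h : G, ψ ⁅g, h⁆ ∈ Subgroup.center G)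
    (α : FreeGroup (Monoid.End G)) :
    (∀ g h k : G, op ψ α (op ψ α g h) k = op ψ α g (op ψ α h k)) ∧
    (∀ g : G, op ψ α 1 g = g ∧ op ψ α g 1 = g) ∧
    (∀ g : G, op ψ α ((ψ (evalE α g))⁻¹ * g⁻¹ * ψ (evalE α g)) g = 1 ∧
      op ψ α g ((ψ (evalE α g))⁻¹ * g⁻¹ * ψ (evalE α g)) = 1) := by
  have hinv : ∀ g : G, Abelianization.of (evalE α g⁻¹) = (Abelianization.of (evalE α g))⁻¹ := by
    intro g
    have h1 := evalE_ab α g g⁻¹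
    rw [mul_inv_cancel, evalE_apply_one, map_one] at h1
    exact (inv_eq_of_mul_eq_one_right h1.symm).symm
  refine ⟨?_, ?_, ?_⟩
  · intro g h k
    set c := ψ (evalE α g) with hc
    set d := ψ (evalE α h) with hd
    have hab : Abelianization.of (evalE α (op ψ α g h)) =
        Abelianization.of (evalE α g * evalE α h) := by
      show Abelianization.of (evalE α (g * ψ (evalE α g) * h * (ψ (evalE α g))⁻¹)) = _
      rw [map_mul, evalE_ab, evalE_ab, evalE_ab, hinv, mul_right_comm, mul_inv_cancel_right]
    obtain ⟨z, hz, hez⟩ := psi_eq_of_ab ψ hψ hab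
    have hzc : ∀ x : G, z * x = x * z := fun x => (Subgroup.mem_center_iff.mp hz x).symm
    rw [map_mul] at hez
    show op ψ α g h * ψ (evalE α (op ψ α g h)) * k * (ψ (evalE α (op ψ α g h)))⁻¹ =
      g * c * (h * d * k * d⁻¹) * c⁻¹
    rw [hez]
    show g * c * h * c⁻¹ * (c * d * z) * k * (c * d * z)⁻¹ = g * c * (h * d * k * d⁻¹) * c⁻¹
    have hk : z * k * z⁻¹ = k := by rw [hzc k]; group
    calc g * c * h * c⁻¹ * (c * d * z) * k * (c * d * z)⁻¹
        = g * c * (h * (d * (z * k * z⁻¹) * d⁻¹)) * c⁻¹ := by group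
      _ = g * c * (h * d * k * d⁻¹) * c⁻¹ := by rw [hk]; group
  · intro g
    constructor
    · show 1 * ψ (evalE α 1) * g * (ψ (evalE α 1))⁻¹ = g
      rw [evalE_apply_one, map_one]; group
    · show g * ψ (evalE α g) * 1 * (ψ (evalE α g))⁻¹ = g
      group
  · intro g
    set c := ψ (evalE α g) with hc
    set u := c⁻¹ * g⁻¹ * c with hu
    constructor
    · have hab : Abelianization.of (evalE α u) = Abelianization.of (evalE α g⁻¹) := by
        rw [hu, evalE_ab, evalE_ab, hinv c, mul_right_comm, inv_mul_cancel, one_mul]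
      obtain ⟨z, hz, hez⟩ := psi_eq_of_ab ψ hψ hab
      obtain ⟨w, hw, hew⟩ := psi_eq_of_ab ψ hψ
        (show Abelianization.of (evalE α g⁻¹) = Abelianization.of ((evalE α g)⁻¹) by
          rw [map_inv, hinv])
      have hcinv : ψ ((evalE α g)⁻¹) = c⁻¹ := map_inv ψ _
      have hzc : ∀ x : G, z * x = x * z := fun x => (Subgroup.mem_center_iff.mp hz x).symm
      have hwc : ∀ x : G, w * x = x * w := fun x => (Subgroup.mem_center_iff.mp hw x).symm
      show u * ψ (evalE α u) * g * (ψ (evalE α u))⁻¹ = 1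
      rw [hez, hew, hcinv]
      have h1 : z * g * z⁻¹ = g := by rw [hzc g]; group
      have h2 : w * g * w⁻¹ = g := by rw [hwc g]; group
      have key : (c⁻¹ * w * z) * g * (c⁻¹ * w * z)⁻¹ = c⁻¹ * g * c := by
        calc (c⁻¹ * w * z) * g * (c⁻¹ * w * z)⁻¹
            = c⁻¹ * (w * (z * g * z⁻¹) * w⁻¹) * c := by group
          _ = c⁻¹ * g * c := by rw [h1, h2]
      calc u * (c⁻¹ * w * z) * g * (c⁻¹ * w * z)⁻¹
          = u * ((c⁻¹ * w * z) * g * (c⁻¹ * w * z)⁻¹) := by group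
        _ = u * (c⁻¹ * g * c) := by rw [key]
        _ = 1 := by rw [hu]; group
    · show g * c * u * c⁻¹ = 1
      rw [hu]; group
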